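/- arXiv:2311.04486 — 2 statements merged into one kernel-verified Lean document; each statement's English description precedes it below -/
import Mathlib

section
/- Every element of the Fitting subgroup $F(G)$ of a finite group $G$ is a left Engel element: for every $y \in F(G)$ and every $x \in G$, there exists $n \in \mathbb{N}$ such that $[x,{}_n y] = 1$. -/
open scoped commutatorElement

/-- The iterated Engel commutator: `engel x y 0 = x`, `engel x y (n+1) = ⁅engel x y n, y⁆`. -/
def engel {G : Type*} [Group G] (x y : G) : ℕ → G
  | 0 => x
  | n + 1 => ⁅engel x y n, y⁆

theorem stmt5 {G : Type*} [Group G] [Finite G] (F : Subgroup G) (hFnormal : F.Normal)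
    (hFnil : Group.IsNilpotent F)
    (hFmax : ∀ K : Subgroup G, K.Normal → Group.IsNilpotent K → K ≤ F)
    (y : G) (hy : y ∈ F) (x : G) :
    ∃ n, engel x y n = 1 := by
  set y' : F := ⟨y, hy⟩ with hy'
  have key : ∀ n, ∃ z : F, z ∈ Subgroup.lowerCentralSeries (⊤ : Subgroup F) n ∧ engel x y (n + 1) = (z : G) := by
    intro n
    induction n with
    | zero =>
      have h1 : ⁅x, y⁆ ∈ F := by
        have : x * y * x⁻¹ ∈ F := hFnormal.conj_mem _ hy x
        simpa [commutatorElement_def, mul_assoc] using mul_mem this (inv_mem hy)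
      exact ⟨⟨⁅x, y⁆, h1⟩, Subgroup.mem_top _, rfl⟩
    | succ n ih =>
      obtain ⟨z, hz, hze⟩ := ih
      refine ⟨⁅z, y'⁆, ?_, ?_⟩
      · rw [lowerCentralSeries_succ]
        exact Subgroup.commutator_mem_commutator hz (Subgroup.mem_top _)
      · show ⁅engel x y (n + 1), y⁆ = _
        rw [hze]
        simp [commutatorElement_def, hy']
  obtain ⟨c, hc⟩ := nilpotent_iff_lowerCentralSeries.mp hFnil
  obtain ⟨z, hz, hze⟩ := key c
  rw [hc, Subgroup.mem_bot] at hz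
  exact ⟨c + 1, by rw [hze, hz]; rfl⟩
end

section
/- Let $G$ be a finite group whose Fitting subgroup $F(G)$ is nontrivial and suppose a Sylow $p$-subgroup $P$ of $G$ ($p$ odd) does not act fixed-point-freely on $F(G)$: some non-identity $s \in P$ centralizes some non-identity $f' \in F(G)$. Then for every non-identity $x \in P$ and every non-identity $f \in F(G)$, there is a directed path of length at most $4$ from $f$ to $x$ in the Engel-type graph $\Delta(G)$ on $G \setminus \{1\}$. -/
open scoped commutatorElement

/-- There is a directed path of length at most `k` from `x` to `y`, staying inside the
vertex set `V`, where `(a,b)` is an arc iff some Engel word `[a, _n b]` is trivial. -/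
def engelReach {G : Type*} [Group G] (V : Set G) (k : ℕ) (x y : G) : Prop :=
  ∃ c ≤ k, ∃ f : ℕ → G, f 0 = x ∧ f c = y ∧ (∀ i ≤ c, f i ∈ V) ∧
    ∀ i < c, ∃ n, engel (f i) (f (i + 1)) n = 1

lemma engel_map {G H : Type*} [Group G] [Group H] (φ : G →* H) (a b : G) :
    ∀ n, φ (engel a b n) = engel (φ a) (φ b) n
  | 0 => rfl
  | n + 1 => by
    simp only [engel, map_commutatorElement, engel_map φ a b n]

lemma engel_mem_lcs {G : Type*} [Group G] (a b : G) :
    ∀ n, engel a b (n + 1) ∈ Subgroup.lowerCentralSeries ⊤ (n + 1)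
  | 0 => by
    simpa [engel] using
      Subgroup.commutator_mem_commutator (Subgroup.mem_top a) (Subgroup.mem_top b)
  | n + 1 =>
    Subgroup.commutator_mem_commutator (engel_mem_lcs a b n) (Subgroup.mem_top b)

lemma engel_eq_one_of_nilpotent {G : Type*} [Group G] (h : Group.IsNilpotent G)
    (a b : G) : ∃ n, engel a b n = 1 := by
  obtain ⟨n, hn⟩ := Subgroup.nilpotent_iff_lowerCentralSeries.mp h
  refine ⟨n + 1, ?_⟩
  have := Subgroup.lowerCentralSeries_antitone ⊤ (Nat.le_succ n) (engel_mem_lcs a b n)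
  rw [hn] at this
  simpa using this

theorem stmt16 {G : Type*} [Group G] [Finite G] (F : Subgroup G) (hFnormal : F.Normal)
    (hFnil : Group.IsNilpotent F)
    (hFmax : ∀ K : Subgroup G, K.Normal → Group.IsNilpotent K → K ≤ F)
    (hFne : F ≠ ⊥) (p : ℕ) (hp : p.Prime) (hodd : Odd p) (P : Sylow p G)
    (s : G) (hs : s ∈ P) (hs1 : s ≠ 1)
    (f' : G) (hf' : f' ∈ F) (hf'1 : f' ≠ 1) (hcomm : Commute s f') :
    ∀ x ∈ P, x ≠ 1 → ∀ f ∈ F, f ≠ 1 → engelReach {g : G | g ≠ 1} 4 f x := by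
  intro x hx hx1 f hf hf1
  haveI : Fact p.Prime := ⟨hp⟩
  -- nontrivial center of P
  haveI : Nontrivial (P : Subgroup G) := by
    refine ⟨⟨s, hs⟩, 1, ?_⟩
    simp [Subtype.ext_iff, hs1]
  haveI := P.isPGroup'.center_nontrivial
  obtain ⟨z', hz'⟩ := exists_ne (α := Subgroup.center (P : Subgroup G)) 1
  set z : G := ((z' : (P : Subgroup G)) : G) with hzdef
  have hzP : z ∈ (P : Subgroup G) := (z' : (P : Subgroup G)).2
  have hz1 : z ≠ 1 := by
    intro h
    apply hz'
    ext
    exact h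
  have hzcomm : ∀ g ∈ (P : Subgroup G), ⁅z, g⁆ = 1 := by
    intro g hg
    have h0 := z'.2.comm ⟨g, hg⟩
    have hc : z * g = g * z := congrArg Subtype.val h0
    rw [commutatorElement_eq_one_iff_commute]
    exact hc
  -- arc f → f' : Engel inside nilpotent F
  have harc1 : ∃ n, engel f f' n = 1 := by
    obtain ⟨n, hn⟩ := engel_eq_one_of_nilpotent hFnil ⟨f, hf⟩ ⟨f', hf'⟩
    refine ⟨n, ?_⟩
    have := congrArg (Subgroup.subtype F) hn
    rw [engel_map] at this
    simpa using this
  obtain ⟨n₁, hn₁⟩ := harc1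
  refine ⟨4, le_rfl, fun i => if i = 0 then f else if i = 1 then f' else if i = 2 then s
    else if i = 3 then z else x, by simp, by simp, ?_, ?_⟩
  · intro i hi
    interval_cases i <;> simp [hf1, hf'1, hs1, hz1, hx1, Set.mem_setOf_eq]
  · intro i hi
    interval_cases i
    · exact ⟨n₁, by simpa using hn₁⟩
    · exact ⟨2, by simp [engel, hcomm.symm.commutator_eq]⟩
    · exact ⟨2, by
        simp only [engel]
        have : ⁅z, s⁆ = 1 := hzcomm s hs
        have hsz : ⁅s, z⁆ = 1 := by
          rw [commutatorElement_eq_one_iff_commute] at this ⊢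
          exact this.symm
        simp [hsz]⟩
    · exact ⟨2, by simp [engel, hzcomm x hx]⟩
end
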